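/- Let a, b ∈ (0, ∞) with a ≠ b. Then λ'(a) = λ'(b) if and only if (a − b)²(1 − 9ab) = (3ab + 1)(3a²b² + 6ab − 1). In particular, if a ≠ b and λ'(a) = λ'(b) then 1/9 < ab ≤ γ₀². -/

import Mathlib

/-!
`lam` is the gravity–capillary dispersion relation λ(x) = √(x + x³) (with g = σ = 1);
λ' denotes its derivative on (0, ∞); `gamma0` is γ₀ = √((2√3 − 3)/3).
-/

noncomputable section

open Real Set

/-- The dispersion relation λ(x) = √(x + x³). -/
def lam (x : ℝ) : ℝ := Real.sqrt (x + x ^ 3)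

/-- γ₀ = √((2√3 − 3)/3). -/
def gamma0 : ℝ := Real.sqrt ((2 * Real.sqrt 3 - 3) / 3)

set_option maxHeartbeats 1000000 in
lemma deriv_lam (x : ℝ) (hx : 0 < x) :
    deriv lam x = (1 + 3 * x ^ 2) / (2 * Real.sqrt (x + x ^ 3)) := by
  have hpos : 0 < x + x ^ 3 := by positivity
  have h1 : HasDerivAt (fun y : ℝ => y + y ^ 3) (1 + 3 * x ^ 2) x := by
    exact ((hasDerivAt_id' x).add (hasDerivAt_pow 3 x)).congr_deriv (by simp)
  have h2 : HasDerivAt (fun y => Real.sqrt (y + y ^ 3))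
      ((1 + 3 * x ^ 2) / (2 * Real.sqrt (x + x ^ 3))) x := h1.sqrt hpos.ne'
  unfold lam
  exact h2.deriv

set_option maxHeartbeats 1000000 in
/-- For a ≠ b in (0, ∞): λ'(a) = λ'(b) iff (a − b)²(1 − 9ab) = (3ab + 1)(3a²b² + 6ab − 1);
in particular if λ'(a) = λ'(b) then 1/9 < ab ≤ γ₀². -/
theorem stmt4 (a b : ℝ) (ha : 0 < a) (hb : 0 < b) (hab : a ≠ b) :
    (deriv lam a = deriv lam b ↔
      (a - b) ^ 2 * (1 - 9 * (a * b)) =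
        (3 * (a * b) + 1) * (3 * (a * b) ^ 2 + 6 * (a * b) - 1)) ∧
    (deriv lam a = deriv lam b → 1 / 9 < a * b ∧ a * b ≤ gamma0 ^ 2) := by
  have hA : 0 < a + a ^ 3 := by positivity
  have hB : 0 < b + b ^ 3 := by positivity
  have hsa : 0 < Real.sqrt (a + a ^ 3) := Real.sqrt_pos.mpr hA
  have hsb : 0 < Real.sqrt (b + b ^ 3) := Real.sqrt_pos.mpr hB
  have hsa2 : Real.sqrt (a + a ^ 3) ^ 2 = a + a ^ 3 := Real.sq_sqrt hA.le
  have hsb2 : Real.sqrt (b + b ^ 3) ^ 2 = b + b ^ 3 := Real.sq_sqrt hB.le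
  have hpa : 0 < 1 + 3 * a ^ 2 := by positivity
  have hpb : 0 < 1 + 3 * b ^ 2 := by positivity
  have key : deriv lam a = deriv lam b ↔
      (1 + 3 * a ^ 2) ^ 2 * (b + b ^ 3) = (1 + 3 * b ^ 2) ^ 2 * (a + a ^ 3) := by
    rw [deriv_lam a ha, deriv_lam b hb, div_eq_div_iff (by positivity) (by positivity)]
    constructor
    · intro h
      have h2 : ((1 + 3 * a ^ 2) * (2 * Real.sqrt (b + b ^ 3))) ^ 2
          = ((1 + 3 * b ^ 2) * (2 * Real.sqrt (a + a ^ 3))) ^ 2 := by rw [h]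
      nlinarith [hsa2, hsb2]
    · intro h
      have h2 : ((1 + 3 * a ^ 2) * (2 * Real.sqrt (b + b ^ 3))) ^ 2
          = ((1 + 3 * b ^ 2) * (2 * Real.sqrt (a + a ^ 3))) ^ 2 := by
        rw [mul_pow, mul_pow, mul_pow, mul_pow, hsa2, hsb2]; nlinarith [h]
      have hx : 0 ≤ (1 + 3 * a ^ 2) * (2 * Real.sqrt (b + b ^ 3)) := by positivity
      have hy : 0 ≤ (1 + 3 * b ^ 2) * (2 * Real.sqrt (a + a ^ 3)) := by positivity
      exact (pow_left_inj₀ hx hy (two_ne_zero)).mp h2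
  have hfac : (1 + 3 * a ^ 2) ^ 2 * (b + b ^ 3) - (1 + 3 * b ^ 2) ^ 2 * (a + a ^ 3)
      = (b - a) * ((a - b) ^ 2 * (1 - 9 * (a * b)) -
        (3 * (a * b) + 1) * (3 * (a * b) ^ 2 + 6 * (a * b) - 1)) := by ring
  have hba : b - a ≠ 0 := sub_ne_zero.mpr (Ne.symm hab)
  have iff1 : deriv lam a = deriv lam b ↔
      (a - b) ^ 2 * (1 - 9 * (a * b)) =
        (3 * (a * b) + 1) * (3 * (a * b) ^ 2 + 6 * (a * b) - 1) := by
    rw [key]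
    constructor
    · intro h
      have h0 : (b - a) * ((a - b) ^ 2 * (1 - 9 * (a * b)) -
          (3 * (a * b) + 1) * (3 * (a * b) ^ 2 + 6 * (a * b) - 1)) = 0 := by
        rw [← hfac]; linarith
      rcases mul_eq_zero.mp h0 with h1 | h1
      · exact absurd h1 hba
      · linarith
    · intro h
      have : (1 + 3 * a ^ 2) ^ 2 * (b + b ^ 3) - (1 + 3 * b ^ 2) ^ 2 * (a + a ^ 3) = 0 := by
        rw [hfac]; rw [sub_eq_zero.mpr h]; ring
      linarith
  refine ⟨iff1, fun h => ?_⟩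
  have heq := iff1.mp h
  have hd2 : 0 < (a - b) ^ 2 := by
    have := sub_ne_zero.mpr hab; positivity
  have hp : 0 < a * b := mul_pos ha hb
  generalize hq : a * b = q at heq hp ⊢
  generalize hdd : (a - b) ^ 2 = d at heq hd2
  have h19 : 1 / 9 < q := by
    by_contra hle
    push_neg at hle
    nlinarith [mul_nonneg hd2.le (by linarith : (0:ℝ) ≤ 1 - 9 * q)]
  refine ⟨h19, ?_⟩
  have hneg : (3 * q + 1) * (3 * q ^ 2 + 6 * q - 1) < 0 := by
    rw [← heq]
    exact mul_neg_of_pos_of_neg hd2 (by linarith)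
  have h5 : 3 * q ^ 2 + 6 * q - 1 < 0 := by nlinarith
  have hs3 : Real.sqrt 3 ^ 2 = 3 := Real.sq_sqrt (by norm_num)
  have hs3n : 0 ≤ Real.sqrt 3 := Real.sqrt_nonneg 3
  have hg : gamma0 ^ 2 = (2 * Real.sqrt 3 - 3) / 3 := by
    unfold gamma0
    exact Real.sq_sqrt (by nlinarith)
  rw [hg]
  nlinarith [sq_nonneg (q + 1 - 2 * Real.sqrt 3 / 3)]

end
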